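/- (Discrete Loomis–Whitney in 3D) For any nonempty finite set E ⊆ ℤ³, |E|² ≤ |φ₁₂(E)| · |φ₁₃(E)| · |φ₂₃(E)|, where φ₁₂(i,j,k) = (i,j), φ₁₃(i,j,k) = (i,k), φ₂₃(i,j,k) = (j,k). -/

import Mathlib

open Finset NNReal

theorem stmt_1 (E : Finset (ℤ × ℤ × ℤ)) (hE : E.Nonempty) :
    E.card ^ 2 ≤ (E.image (fun p => (p.1, p.2.1))).card *
      (E.image (fun p => (p.1, p.2.2))).card *
      (E.image (fun p => (p.2.1, p.2.2))).card := by
  classical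
  set A := E.image (fun p => (p.1, p.2.1)) with hA
  set B := E.image (fun p => (p.1, p.2.2)) with hB
  set C := E.image (fun p => (p.2.1, p.2.2)) with hC
  set K := E.image (fun p => p.2.2) with hK
  set F : ℤ → Finset (ℤ × ℤ × ℤ) := fun k => E.filter (fun p => p.2.2 = k) with hF
  set n : ℤ → ℕ := fun k => (F k).card with hn
  set fa : ℤ → ℕ := fun k => ((F k).image (fun p => p.1)).card with hfa
  set fb : ℤ → ℕ := fun k => ((F k).image (fun p => p.2.1)).card with hfb
  -- (i) total card
  have hsum : E.card = ∑ k ∈ K, n k := by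
    exact card_eq_sum_card_fiberwise (fun p hp => mem_image_of_mem _ hp)
  -- (ii) n k ≤ A.card
  have hnA : ∀ k ∈ K, n k ≤ A.card := by
    intro k _
    refine card_le_card_of_injOn (fun p => (p.1, p.2.1)) ?_ ?_
    · intro p hp
      exact mem_image_of_mem _ (mem_filter.1 hp).1
    · intro p hp q hq h
      simp only [Finset.mem_coe, hF, mem_filter] at hp hq
      simp only [Prod.mk.injEq] at h
      exact Prod.ext h.1 (Prod.ext h.2 (hp.2.trans hq.2.symm))
  -- (iii) n k ≤ fa k * fb k
  have hnab : ∀ k, n k ≤ fa k * fb k := by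
    intro k
    rw [← card_product]
    refine card_le_card_of_injOn (fun p => (p.1, p.2.1)) ?_ ?_
    · intro p hp
      exact mem_product.2 ⟨mem_image_of_mem _ hp, mem_image_of_mem _ hp⟩
    · intro p hp q hq h
      simp only [Finset.mem_coe, hF, mem_filter] at hp hq
      simp only [Prod.mk.injEq] at h
      exact Prod.ext h.1 (Prod.ext h.2 (hp.2.trans hq.2.symm))
  -- (iv) sum of fa ≤ B.card
  have hfaB : ∑ k ∈ K, fa k ≤ B.card := by
    have h1 : B.card = ∑ k ∈ K, (B.filter (fun q => q.2 = k)).card := by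
      refine card_eq_sum_card_fiberwise ?_
      intro q hq
      obtain ⟨p, hp, rfl⟩ := mem_image.1 hq
      exact mem_image_of_mem _ hp
    rw [h1]
    refine Finset.sum_le_sum ?_
    intro k _
    refine card_le_card_of_injOn (fun i => (i, k)) ?_ ?_
    · intro i hi
      obtain ⟨p, hp, rfl⟩ := mem_image.1 hi
      simp only [hF, mem_filter] at hp
      exact mem_filter.2 ⟨mem_image.2 ⟨p, hp.1, by simp [hp.2]⟩, rfl⟩
    · intro i _ j _ h
      simpa using h
  -- (v) sum of fb ≤ C.card
  have hfbC : ∑ k ∈ K, fb k ≤ C.card := by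
    have h1 : C.card = ∑ k ∈ K, (C.filter (fun q => q.2 = k)).card := by
      refine card_eq_sum_card_fiberwise ?_
      intro q hq
      obtain ⟨p, hp, rfl⟩ := mem_image.1 hq
      exact mem_image_of_mem _ hp
    rw [h1]
    refine Finset.sum_le_sum ?_
    intro k _
    refine card_le_card_of_injOn (fun j => (j, k)) ?_ ?_
    · intro j hj
      obtain ⟨p, hp, rfl⟩ := mem_image.1 hj
      simp only [hF, mem_filter] at hp
      exact mem_filter.2 ⟨mem_image.2 ⟨p, hp.1, by simp [hp.2]⟩, rfl⟩
    · intro i _ j _ h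
      simpa using h
  -- now pass to ℝ≥0
  have key : (E.card : ℝ≥0) ≤ NNReal.sqrt A.card * (NNReal.sqrt B.card * NNReal.sqrt C.card) := by
    have step1 : (E.card : ℝ≥0) ≤
        ∑ k ∈ K, NNReal.sqrt A.card * (NNReal.sqrt (fa k) * NNReal.sqrt (fb k)) := by
      rw [hsum]
      push_cast
      refine Finset.sum_le_sum ?_
      intro k hk
      have h2 : (n k : ℝ≥0) ^ 2 ≤ (A.card : ℝ≥0) * ((fa k : ℝ≥0) * (fb k : ℝ≥0)) := by
        have : n k * n k ≤ A.card * (fa k * fb k) :=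
          Nat.mul_le_mul (hnA k hk) (hnab k)
        push_cast [sq]
        exact_mod_cast this
      have := NNReal.sqrt_le_sqrt.2 h2
      rwa [NNReal.sqrt_sq, NNReal.sqrt_mul, NNReal.sqrt_mul] at this
    refine step1.trans ?_
    rw [← Finset.mul_sum]
    refine mul_le_mul_of_nonneg_left ?_ zero_le
    calc ∑ k ∈ K, NNReal.sqrt (fa k) * NNReal.sqrt (fb k)
        ≤ NNReal.sqrt (∑ k ∈ K, (fa k : ℝ≥0)) * NNReal.sqrt (∑ k ∈ K, (fb k : ℝ≥0)) :=
          NNReal.sum_sqrt_mul_sqrt_le _ _ _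
      _ ≤ NNReal.sqrt B.card * NNReal.sqrt C.card := by
          gcongr
          · exact_mod_cast hfaB
          · exact_mod_cast hfbC
  have key2 : (E.card : ℝ≥0) ^ 2 ≤ (A.card : ℝ≥0) * ((B.card : ℝ≥0) * (C.card : ℝ≥0)) := by
    calc (E.card : ℝ≥0) ^ 2 ≤ (NNReal.sqrt A.card * (NNReal.sqrt B.card * NNReal.sqrt C.card)) ^ 2 :=
          pow_le_pow_left₀ zero_le key 2
      _ = _ := by rw [mul_pow, mul_pow, NNReal.sq_sqrt, NNReal.sq_sqrt, NNReal.sq_sqrt]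
  have h3 : E.card ^ 2 ≤ A.card * (B.card * C.card) := by exact_mod_cast key2
  rw [mul_assoc]
  exact h3
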